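/- Fix real numbers α, η, β with 1 < α < η < β, and real numbers N > 0, A ≠ 0, B. Then there exist c ∈ ℝ and t > 0 such that φ_c′(t) = 0 and φ_c″(t) = 0 if and only if B > 0. Moreover, when B > 0 this pair (c, t) is unique and is given by t = ((η−α)N/((β−α)B))^{1/(β−η)} and c = −((η−α)(β−η)/(ηβα)) · ((η−α)/(β−α))^{η/(β−η)} · N^{β/(β−η)}/B^{η/(β−η)}. -/

import Mathlib

/-- The fibering map `φ_c(t) = ((t^η/η)N − (t^β/β)B − c)/((t^α/α)A)` on `(0,∞)`. -/
noncomputable def fib (α η β N A B c : ℝ) : ℝ → ℝ :=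
  fun t => ((t ^ η / η) * N - (t ^ β / β) * B - c) / ((t ^ α / α) * A)

open Real Filter Set

private lemma hasDerivAt_rpow' (p : ℝ) {t : ℝ} (ht : 0 < t) :
    HasDerivAt (fun s : ℝ => s ^ p) (p * t ^ (p - 1)) t :=
  Real.hasDerivAt_rpow_const (Or.inl ht.ne')

private lemma fib_eq (α η β N A B c : ℝ) (hη : η ≠ 0) (hβ : β ≠ 0) (hA : A ≠ 0)
    {s : ℝ} (hs : 0 < s) :
    fib α η β N A B c s =
      (α / A) * (N / η * s ^ (η - α) - B / β * s ^ (β - α) - c * s ^ (-α)) := by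
  have hsα : (s : ℝ) ^ α ≠ 0 := (Real.rpow_pos_of_pos hs α).ne'
  simp only [fib]
  rw [Real.rpow_sub hs, Real.rpow_sub hs, Real.rpow_neg hs.le]
  field_simp

private lemma hasDerivAt_fib (α η β N A B c : ℝ) (hη : η ≠ 0) (hβ : β ≠ 0) (hA : A ≠ 0)
    {t : ℝ} (ht : 0 < t) :
    HasDerivAt (fib α η β N A B c)
      ((α / A) * (N / η * ((η - α) * t ^ (η - α - 1))
        - B / β * ((β - α) * t ^ (β - α - 1)) - c * ((-α) * t ^ (-α - 1)))) t := by
  have h1 := (hasDerivAt_rpow' (η - α) ht).const_mul (N / η)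
  have h2 := (hasDerivAt_rpow' (β - α) ht).const_mul (B / β)
  have h3 := (hasDerivAt_rpow' (-α) ht).const_mul c
  have h := ((h1.sub h2).sub h3).const_mul (α / A)
  refine h.congr_of_eventuallyEq ?_
  filter_upwards [Ioi_mem_nhds ht] with s hs
  exact fib_eq α η β N A B c hη hβ hA hs

private lemma deriv_deriv_fib (α η β N A B c : ℝ) (hη : η ≠ 0) (hβ : β ≠ 0) (hA : A ≠ 0)
    {t : ℝ} (ht : 0 < t) :
    deriv (deriv (fib α η β N A B c)) t =
      (α / A) * (N / η * ((η - α) * ((η - α - 1) * t ^ (η - α - 1 - 1)))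
        - B / β * ((β - α) * ((β - α - 1) * t ^ (β - α - 1 - 1)))
        - c * ((-α) * ((-α - 1) * t ^ (-α - 1 - 1)))) := by
  have hev : deriv (fib α η β N A B c) =ᶠ[nhds t]
      (fun s => (α / A) * (N / η * ((η - α) * s ^ (η - α - 1))
        - B / β * ((β - α) * s ^ (β - α - 1)) - c * ((-α) * s ^ (-α - 1)))) := by
    filter_upwards [Ioi_mem_nhds ht] with s hs
    exact (hasDerivAt_fib α η β N A B c hη hβ hA hs).deriv
  rw [hev.deriv_eq]
  have h1 := ((hasDerivAt_rpow' (η - α - 1) ht).const_mul (η - α)).const_mul (N / η)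
  have h2 := ((hasDerivAt_rpow' (β - α - 1) ht).const_mul (β - α)).const_mul (B / β)
  have h3 := ((hasDerivAt_rpow' (-α - 1) ht).const_mul (-α)).const_mul c
  have h := ((h1.sub h2).sub h3).const_mul (α / A)
  exact h.deriv

private lemma aux1 (α η β N B c X Y T : ℝ) (hη : η ≠ 0) (hβ : β ≠ 0)
    (hc : c * (α * η * β) = -(η - α) * (β - η) * (N * X))
    (hkey : B * (β - α) * Y = N * (η - α) * X) :
    N / η * ((η - α) * (X * T)) - B / β * ((β - α) * (Y * T)) - c * (-α * T) = 0 := by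
  have hG : N / η * ((η - α) * (X * T)) - B / β * ((β - α) * (Y * T)) - c * (-α * T)
      = (β * N * (η - α) * X - η * B * (β - α) * Y + η * β * (c * α)) * T / (η * β) := by
    field_simp
    ring
  rw [hG, div_eq_zero_iff]
  left
  linear_combination (-(η * T)) * hkey + T * hc

private lemma aux2 (α η β N B c X Y S : ℝ) (hη : η ≠ 0) (hβ : β ≠ 0)
    (hc : c * (α * η * β) = -(η - α) * (β - η) * (N * X))
    (hkey : B * (β - α) * Y = N * (η - α) * X) :
    N / η * ((η - α) * ((η - α - 1) * (X * S))) - B / β * ((β - α) * ((β - α - 1) * (Y * S)))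
      - c * (-α * ((-α - 1) * S)) = 0 := by
  have hG : N / η * ((η - α) * ((η - α - 1) * (X * S)))
      - B / β * ((β - α) * ((β - α - 1) * (Y * S))) - c * (-α * ((-α - 1) * S))
      = (β * N * (η - α) * (η - α - 1) * X - η * B * (β - α) * (β - α - 1) * Y
          - η * β * (c * α) * (α + 1)) * S / (η * β) := by
    field_simp
    ring
  rw [hG, div_eq_zero_iff]
  left
  linear_combination (-(η * (β - α - 1) * S)) * hkey - ((α + 1) * S) * hc

/-- Core algebra: the two vanishing conditions give the two key identities. -/
private lemma fib_core (α η β N A B c : ℝ) (h1 : 1 < α) (h2 : α < η) (h3 : η < β) (hA : A ≠ 0)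
    {t : ℝ} (ht : 0 < t)
    (e1 : (α / A) * (N / η * ((η - α) * t ^ (η - α - 1))
        - B / β * ((β - α) * t ^ (β - α - 1)) - c * ((-α) * t ^ (-α - 1))) = 0)
    (e2 : (α / A) * (N / η * ((η - α) * ((η - α - 1) * t ^ (η - α - 1 - 1)))
        - B / β * ((β - α) * ((β - α - 1) * t ^ (β - α - 1 - 1)))
        - c * ((-α) * ((-α - 1) * t ^ (-α - 1 - 1)))) = 0) :
    N * (η - α) * t ^ η = B * (β - α) * t ^ β ∧
      c * (α * η * β) = -(η - α) * (β - η) * (N * t ^ η) := by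
  have hα : (0:ℝ) < α := lt_trans one_pos h1
  have hη : (0:ℝ) < η := lt_trans hα h2
  have hβ : (0:ℝ) < β := lt_trans hη h3
  have hαA : α / A ≠ 0 := div_ne_zero hα.ne' hA
  have hT : (0:ℝ) < t ^ (-(α+1)) := Real.rpow_pos_of_pos ht _
  have hT2 : (0:ℝ) < t ^ (-(α+2)) := Real.rpow_pos_of_pos ht _
  have r1 : t ^ (η - α - 1) = t ^ η * t ^ (-(α+1)) := by
    rw [← Real.rpow_add ht]; congr 1; ring
  have r2 : t ^ (β - α - 1) = t ^ β * t ^ (-(α+1)) := by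
    rw [← Real.rpow_add ht]; congr 1; ring
  have r3 : t ^ (-α - 1) = t ^ (-(α+1)) := by congr 1; ring
  have r4 : t ^ (η - α - 1 - 1) = t ^ η * t ^ (-(α+2)) := by
    rw [← Real.rpow_add ht]; congr 1; ring
  have r5 : t ^ (β - α - 1 - 1) = t ^ β * t ^ (-(α+2)) := by
    rw [← Real.rpow_add ht]; congr 1; ring
  have r6 : t ^ (-α - 1 - 1) = t ^ (-(α+2)) := by congr 1; ring
  rw [r1, r2, r3] at e1
  rw [r4, r5, r6] at e2
  obtain ⟨X, hX⟩ : ∃ X, t ^ η = X := ⟨_, rfl⟩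
  obtain ⟨Y, hY⟩ : ∃ Y, t ^ β = Y := ⟨_, rfl⟩
  obtain ⟨T, hTd⟩ : ∃ T, t ^ (-(α+1)) = T := ⟨_, rfl⟩
  obtain ⟨S, hSd⟩ : ∃ S, t ^ (-(α+2)) = S := ⟨_, rfl⟩
  rw [hX, hY] at e1 ⊢
  rw [hTd] at e1
  rw [hX, hY, hSd] at e2
  rw [hTd] at hT; rw [hSd] at hT2
  have i1 := (mul_eq_zero.1 e1).resolve_left hαA
  have i2 := (mul_eq_zero.1 e2).resolve_left hαA
  have j1 : (N * β * (η - α) * X - B * η * (β - α) * Y + c * α * η * β) * T = 0 := by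
    field_simp at i1
    linear_combination i1
  have j2 : (N * β * (η - α) * (η - α - 1) * X
      - B * η * (β - α) * (β - α - 1) * Y - c * α * (α + 1) * η * β) * S = 0 := by
    field_simp at i2
    linear_combination i2
  have k1 := (mul_eq_zero.1 j1).resolve_right hT.ne'
  have k2 := (mul_eq_zero.1 j2).resolve_right hT2.ne'
  have h : η * β * (N * (η - α) * X - B * (β - α) * Y) = 0 := by
    linear_combination (α + 1) * k1 + k2
  have hk := (mul_eq_zero.1 h).resolve_left (by positivity)
  refine ⟨by linarith, ?_⟩
  linear_combination k1 - η * hk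

/-- The system `φ_c′(t) = 0 = φ_c″(t)` has a solution `(c,t)` with
`t > 0` iff `B > 0`; and in that case the solution is unique and given by the
explicit formulas for `t(u)` and `c(u)`. -/
theorem stmt3 (α η β N A B : ℝ) (h1 : 1 < α) (h2 : α < η) (h3 : η < β)
    (hN : 0 < N) (hA : A ≠ 0) :
    ((∃ c t : ℝ, 0 < t ∧ deriv (fib α η β N A B c) t = 0 ∧
        deriv (deriv (fib α η β N A B c)) t = 0) ↔ 0 < B) ∧
    (0 < B → ∀ c t : ℝ, 0 < t → deriv (fib α η β N A B c) t = 0 →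
        deriv (deriv (fib α η β N A B c)) t = 0 →
        t = ((η - α) * N / ((β - α) * B)) ^ ((1 : ℝ) / (β - η)) ∧
        c = -((η - α) * (β - η) / (η * β * α)) * ((η - α) / (β - α)) ^ (η / (β - η)) *
              (N ^ (β / (β - η)) / B ^ (η / (β - η)))) := by
  have hα : (0:ℝ) < α := lt_trans one_pos h1
  have hη : (0:ℝ) < η := lt_trans hα h2
  have hβ : (0:ℝ) < β := lt_trans hη h3
  have hβη : β - η ≠ 0 := ne_of_gt (by linarith)
  have hβα : (0:ℝ) < β - α := by linarith
  have hηα : (0:ℝ) < η - α := by linarith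
  constructor
  · constructor
    · rintro ⟨c, t, ht, hd1, hd2⟩
      rw [(hasDerivAt_fib α η β N A B c hη.ne' hβ.ne' hA ht).deriv] at hd1
      rw [deriv_deriv_fib α η β N A B c hη.ne' hβ.ne' hA ht] at hd2
      obtain ⟨key, -⟩ := fib_core α η β N A B c h1 h2 h3 hA ht hd1 hd2
      have hx := Real.rpow_pos_of_pos ht η
      have hy := Real.rpow_pos_of_pos ht β
      nlinarith [mul_pos (mul_pos hN hηα) hx, mul_pos hβα hy]
    · intro hB
      set u : ℝ := (η - α) * N / ((β - α) * B) with hu_def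
      have hu : 0 < u := by positivity
      set t : ℝ := u ^ ((1:ℝ) / (β - η)) with ht_def
      have ht : 0 < t := Real.rpow_pos_of_pos hu _
      set c : ℝ := -(η - α) * (β - η) * (N * t ^ η) / (α * η * β) with hc_def
      have hc : c * (α * η * β) = -(η - α) * (β - η) * (N * t ^ η) := by
        rw [hc_def]; field_simp
      have hbX : t ^ (β - η) = u := by
        rw [ht_def, ← Real.rpow_mul hu.le, one_div, inv_mul_cancel₀ hβη, Real.rpow_one]
      have hkey : B * (β - α) * t ^ β = N * (η - α) * t ^ η := by
        have hY : t ^ β = t ^ η * t ^ (β - η) := by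
          rw [← Real.rpow_add ht]; congr 1; ring
        rw [hY, hbX, hu_def]
        field_simp
      refine ⟨c, t, ht, ?_, ?_⟩
      · rw [(hasDerivAt_fib α η β N A B c hη.ne' hβ.ne' hA ht).deriv]
        apply mul_eq_zero_of_right
        have r1 : t ^ (η - α - 1) = t ^ η * t ^ (-(α+1)) := by
          rw [← Real.rpow_add ht]; congr 1; ring
        have r2 : t ^ (β - α - 1) = t ^ β * t ^ (-(α+1)) := by
          rw [← Real.rpow_add ht]; congr 1; ring
        have r3 : t ^ (-α - 1) = t ^ (-(α+1)) := by congr 1; ring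
        rw [r1, r2, r3]
        exact aux1 α η β N B c _ _ _ hη.ne' hβ.ne' hc hkey
      · rw [deriv_deriv_fib α η β N A B c hη.ne' hβ.ne' hA ht]
        apply mul_eq_zero_of_right
        have r4 : t ^ (η - α - 1 - 1) = t ^ η * t ^ (-(α+2)) := by
          rw [← Real.rpow_add ht]; congr 1; ring
        have r5 : t ^ (β - α - 1 - 1) = t ^ β * t ^ (-(α+2)) := by
          rw [← Real.rpow_add ht]; congr 1; ring
        have r6 : t ^ (-α - 1 - 1) = t ^ (-(α+2)) := by congr 1; ring
        rw [r4, r5, r6]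
        exact aux2 α η β N B c _ _ _ hη.ne' hβ.ne' hc hkey
  · intro hB c t ht hd1 hd2
    rw [(hasDerivAt_fib α η β N A B c hη.ne' hβ.ne' hA ht).deriv] at hd1
    rw [deriv_deriv_fib α η β N A B c hη.ne' hβ.ne' hA ht] at hd2
    obtain ⟨key, ceq⟩ := fib_core α η β N A B c h1 h2 h3 hA ht hd1 hd2
    have hx := Real.rpow_pos_of_pos ht η
    set u : ℝ := (η - α) * N / ((β - α) * B) with hu_def
    have hu : 0 < u := by positivity
    have hbX : t ^ (β - η) = u := by
      have hY : t ^ β = t ^ η * t ^ (β - η) := by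
        rw [← Real.rpow_add ht]; congr 1; ring
      rw [hY] at key
      rw [hu_def, eq_div_iff (by positivity)]
      apply mul_left_cancel₀ hx.ne'
      linear_combination -key
    have htf : t = u ^ ((1:ℝ) / (β - η)) := by
      rw [← hbX, ← Real.rpow_mul ht.le, mul_one_div, div_self hβη, Real.rpow_one]
    refine ⟨htf, ?_⟩
    have ht2 : t ^ η = u ^ (η / (β - η)) := by
      rw [htf, ← Real.rpow_mul hu.le]; congr 1; ring
    have hu' : u = ((η - α) / (β - α)) * (N / B) := by rw [hu_def, div_mul_div_comm]
    have hup : u ^ (η / (β - η)) = ((η - α) / (β - α)) ^ (η / (β - η)) *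
        (N ^ (η / (β - η)) / B ^ (η / (β - η))) := by
      rw [hu', Real.mul_rpow (by positivity) (div_nonneg hN.le hB.le), Real.div_rpow hN.le hB.le]
    have hNb : N ^ (β / (β - η)) = N * N ^ (η / (β - η)) := by
      rw [show β / (β - η) = 1 + η / (β - η) by field_simp; ring, Real.rpow_add hN, Real.rpow_one]
    have hcv : c = -(η - α) * (β - η) * (N * t ^ η) / (α * η * β) := by
      rw [eq_div_iff (by positivity)]
      linear_combination ceq
    rw [hcv, ht2, hup, hNb]
    ring
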